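/- Let τ > 0, let (f^n)_{n≥1} be a sequence in V, and let (u^n)_{n≥0} be a sequence in V satisfying M (u^{n+1} − 2u^n + u^{n−1})/τ² + K (u^{n+1} + 2u^n + u^{n−1})/4 = M f^n for every n ≥ 1. Then for every n ≥ 0, |∂_t u^n|_M² + |u^{n+1/2}|_K² ≤ 2 |∂_t u^0|_M² + 2 |u^{1/2}|_K² + 4 ( Σ_{i=1}^n τ |f^i|_M )². -/

import Mathlib

open scoped RealInnerProductSpace

/-- The (semi)norm `|v|_A := ⟨A v, v⟩^{1/2}` induced by a linear operator `A`. -/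
noncomputable def opSemiNorm {V : Type*} [NormedAddCommGroup V] [InnerProductSpace ℝ V]
    (A : V →ₗ[ℝ] V) (v : V) : ℝ :=
  Real.sqrt ⟪A v, v⟫

/-- Cauchy–Schwarz for a symmetric positive semidefinite operator. -/
lemma psd_cauchy_schwarz {V : Type*} [NormedAddCommGroup V] [InnerProductSpace ℝ V]
    (A : V →ₗ[ℝ] V) (hsa : ∀ x y : V, ⟪A x, y⟫ = ⟪x, A y⟫)
    (hpsd : ∀ x : V, 0 ≤ ⟪A x, x⟫) (x y : V) :
    ⟪A x, y⟫ ≤ Real.sqrt ⟪A x, x⟫ * Real.sqrt ⟪A y, y⟫ := by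
  have hsym : ∀ a b : V, ⟪A a, b⟫ = ⟪A b, a⟫ := fun a b => by
    rw [hsa, real_inner_comm]
  have key : ∀ t : ℝ, 0 ≤ ⟪A y, y⟫ * (t * t) + (2 * ⟪A x, y⟫) * t + ⟪A x, x⟫ := by
    intro t
    have h := hpsd (x + t • y)
    have hexp : ⟪A (x + t • y), x + t • y⟫
        = ⟪A y, y⟫ * (t * t) + (2 * ⟪A x, y⟫) * t + ⟪A x, x⟫ := by
      simp only [map_add, map_smul, inner_add_left, inner_add_right,
        real_inner_smul_left, real_inner_smul_right]
      rw [hsym y x]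
      ring
    linarith [hexp ▸ h]
  have hdisc := discrim_le_zero key
  rw [discrim] at hdisc
  have hsq : ⟪A x, y⟫ ^ 2 ≤ ⟪A x, x⟫ * ⟪A y, y⟫ := by nlinarith
  calc ⟪A x, y⟫ ≤ |⟪A x, y⟫| := le_abs_self _
    _ = Real.sqrt (⟪A x, y⟫ ^ 2) := (Real.sqrt_sq_eq_abs _).symm
    _ ≤ Real.sqrt (⟪A x, x⟫ * ⟪A y, y⟫) := Real.sqrt_le_sqrt hsq
    _ = Real.sqrt ⟪A x, x⟫ * Real.sqrt ⟪A y, y⟫ := Real.sqrt_mul (hpsd x) _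

/-- `⟪A (a - b), a + b⟫ = ⟪A a, a⟫ - ⟪A b, b⟫` for symmetric `A`. -/
lemma sub_add_inner {V : Type*} [NormedAddCommGroup V] [InnerProductSpace ℝ V]
    (A : V →ₗ[ℝ] V) (hsa : ∀ x y : V, ⟪A x, y⟫ = ⟪x, A y⟫) (a b : V) :
    ⟪A (a - b), a + b⟫ = ⟪A a, a⟫ - ⟪A b, b⟫ := by
  have hsym : ⟪A a, b⟫ = ⟪A b, a⟫ := by rw [hsa, real_inner_comm]
  rw [map_sub, inner_sub_left, inner_add_right, inner_add_right]
  linarith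

lemma add_sub_inner {V : Type*} [NormedAddCommGroup V] [InnerProductSpace ℝ V]
    (A : V →ₗ[ℝ] V) (hsa : ∀ x y : V, ⟪A x, y⟫ = ⟪x, A y⟫) (a b : V) :
    ⟪A (a + b), a - b⟫ = ⟪A a, a⟫ - ⟪A b, b⟫ := by
  have hsym : ⟪A a, b⟫ = ⟪A b, a⟫ := by rw [hsa, real_inner_comm]
  rw [map_add, inner_add_left, inner_sub_right, inner_sub_right]
  linarith

lemma smul_quad {V : Type*} [NormedAddCommGroup V] [InnerProductSpace ℝ V]
    (A : V →ₗ[ℝ] V) (c : ℝ) (v : V) :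
    ⟪A (c • v), c • v⟫ = c * c * ⟪A v, v⟫ := by
  rw [map_smul, real_inner_smul_left, real_inner_smul_right]; ring

lemma sqrt_step (A B c : ℝ) (hA : 0 ≤ A) (hB : 0 ≤ B) (hc : 0 ≤ c)
    (h : A - B ≤ c * (Real.sqrt A + Real.sqrt B)) :
    Real.sqrt A ≤ Real.sqrt B + c := by
  set a := Real.sqrt A with ha
  set b := Real.sqrt B with hb
  have ha2 : a ^ 2 = A := Real.sq_sqrt hA
  have hb2 : b ^ 2 = B := Real.sq_sqrt hB
  have hann : 0 ≤ a := Real.sqrt_nonneg _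
  have hbnn : 0 ≤ b := Real.sqrt_nonneg _
  rcases eq_or_lt_of_le (add_nonneg hann hbnn) with h0 | h0
  · have hae : a = 0 := by linarith
    have hbe : b = 0 := by linarith
    rw [hae] at *; linarith
  · have h1 : (a - b) * (a + b) ≤ c * (a + b) := by nlinarith
    have h2 : a - b ≤ c := le_of_mul_le_mul_right h1 h0
    linarith

lemma final_bound (A B S : ℝ) (hA : 0 ≤ A) (hB : 0 ≤ B) (hS : 0 ≤ S)
    (h : Real.sqrt A ≤ Real.sqrt B + S) : A ≤ 2 * B + 4 * S ^ 2 := by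
  have ha2 : Real.sqrt A ^ 2 = A := Real.sq_sqrt hA
  have hb2 : Real.sqrt B ^ 2 = B := Real.sq_sqrt hB
  nlinarith [Real.sqrt_nonneg A, Real.sqrt_nonneg B,
    sq_nonneg (Real.sqrt B - S)]

/-- discrete stability estimate (Lemma 3.4 of the paper) for the scheme
`M (u^{n+1} − 2u^n + u^{n−1})/τ² + K (u^{n+1} + 2u^n + u^{n−1})/4 = M f^n`. -/
theorem stmt3 {V : Type*} [NormedAddCommGroup V] [InnerProductSpace ℝ V]
    [FiniteDimensional ℝ V]
    (M K : V →ₗ[ℝ] V)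
    (hMsa : ∀ x y : V, ⟪M x, y⟫ = ⟪x, M y⟫)
    (hMpd : ∀ x : V, x ≠ 0 → 0 < ⟪M x, x⟫)
    (hKsa : ∀ x y : V, ⟪K x, y⟫ = ⟪x, K y⟫)
    (hKpsd : ∀ x : V, 0 ≤ ⟪K x, x⟫)
    (τ : ℝ) (hτ : 0 < τ) (f : ℕ → V) (u : ℕ → V)
    (hscheme : ∀ n : ℕ, 1 ≤ n →
      M ((τ ^ 2)⁻¹ • (u (n + 1) - (2 : ℝ) • u n + u (n - 1))) +
        K ((4 : ℝ)⁻¹ • (u (n + 1) + (2 : ℝ) • u n + u (n - 1))) = M (f n)) :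
    ∀ n : ℕ,
      opSemiNorm M (τ⁻¹ • (u (n + 1) - u n)) ^ 2 +
          opSemiNorm K ((2 : ℝ)⁻¹ • (u (n + 1) + u n)) ^ 2 ≤
        2 * opSemiNorm M (τ⁻¹ • (u 1 - u 0)) ^ 2 +
          2 * opSemiNorm K ((2 : ℝ)⁻¹ • (u 1 + u 0)) ^ 2 +
          4 * (∑ i ∈ Finset.Icc 1 n, τ * opSemiNorm M (f i)) ^ 2 := by
  have hMnn : ∀ x : V, 0 ≤ ⟪M x, x⟫ := by
    intro x
    by_cases h : x = 0
    · simp [h]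
    · exact (hMpd x h).le
  -- the discrete energy
  set E : ℕ → ℝ := fun n =>
    ⟪M (τ⁻¹ • (u (n + 1) - u n)), τ⁻¹ • (u (n + 1) - u n)⟫ +
      ⟪K ((2 : ℝ)⁻¹ • (u (n + 1) + u n)), (2 : ℝ)⁻¹ • (u (n + 1) + u n)⟫ with hE
  have hEnn : ∀ n, 0 ≤ E n := fun n => add_nonneg (hMnn _) (hKpsd _)
  set F : ℕ → ℝ := fun n => opSemiNorm M (f n) with hF
  have hFnn : ∀ n, 0 ≤ F n := fun n => Real.sqrt_nonneg _
  -- one-step estimate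
  have hstep : ∀ n : ℕ, Real.sqrt (E (n + 1)) ≤ Real.sqrt (E n) + τ * F (n + 1) := by
    intro n
    have heq := hscheme (n + 1) (by omega)
    simp only [Nat.add_sub_cancel] at heq
    set x := u (n + 2) - u (n + 1) with hx
    set y := u (n + 1) - u n with hy
    set p := u (n + 2) + u (n + 1) with hp
    set q := u (n + 1) + u n with hq
    set w := u (n + 2) - u n with hw
    have hxy : u (n + 1 + 1) - (2 : ℝ) • u (n + 1) + u n = x - y := by
      rw [hx, hy]; module
    have hpq : u (n + 1 + 1) + (2 : ℝ) • u (n + 1) + u n = p + q := by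
      rw [hp, hq]; module
    have hwxy : w = x + y := by rw [hw, hx, hy]; module
    have hwpq : w = p - q := by rw [hw, hp, hq]; module
    rw [hxy, hpq] at heq
    have hid : (τ ^ 2)⁻¹ * (⟪M x, x⟫ - ⟪M y, y⟫) +
        (4 : ℝ)⁻¹ * (⟪K p, p⟫ - ⟪K q, q⟫) = ⟪M (f (n + 1)), w⟫ := by
      have h1 := congrArg (fun z => (inner ℝ z w : ℝ)) heq
      simp only [inner_add_left, map_smul, real_inner_smul_left] at h1
      rw [show (inner ℝ (M (x - y)) w : ℝ) = ⟪M x, x⟫ - ⟪M y, y⟫ by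
            rw [hwxy]; exact sub_add_inner M hMsa x y,
          show (inner ℝ (K (p + q)) w : ℝ) = ⟪K p, p⟫ - ⟪K q, q⟫ by
            rw [hwpq]; exact add_sub_inner K hKsa p q] at h1
      exact h1
    -- express E in terms of x, y, p, q
    have hEn1 : E (n + 1) = (τ ^ 2)⁻¹ * ⟪M x, x⟫ + (4 : ℝ)⁻¹ * ⟪K p, p⟫ := by
      show ⟪M (τ⁻¹ • (u (n + 1 + 1) - u (n + 1))), τ⁻¹ • (u (n + 1 + 1) - u (n + 1))⟫ +
          ⟪K ((2:ℝ)⁻¹ • (u (n + 1 + 1) + u (n + 1))), (2:ℝ)⁻¹ • (u (n + 1 + 1) + u (n + 1))⟫ = _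
      rw [show u (n + 1 + 1) - u (n + 1) = x from rfl, show u (n + 1 + 1) + u (n + 1) = p from rfl,
        smul_quad, smul_quad]
      have : τ⁻¹ * τ⁻¹ = (τ ^ 2)⁻¹ := by rw [sq, mul_inv]
      rw [this]; norm_num
    have hEn : E n = (τ ^ 2)⁻¹ * ⟪M y, y⟫ + (4 : ℝ)⁻¹ * ⟪K q, q⟫ := by
      show ⟪M (τ⁻¹ • (u (n + 1) - u n)), τ⁻¹ • (u (n + 1) - u n)⟫ +
          ⟪K ((2:ℝ)⁻¹ • (u (n + 1) + u n)), (2:ℝ)⁻¹ • (u (n + 1) + u n)⟫ = _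
      rw [show u (n + 1) - u n = y from rfl, show u (n + 1) + u n = q from rfl,
        smul_quad, smul_quad]
      have : τ⁻¹ * τ⁻¹ = (τ ^ 2)⁻¹ := by rw [sq, mul_inv]
      rw [this]; norm_num
    -- bound the right hand side
    have hxb : Real.sqrt ⟪M x, x⟫ ≤ τ * Real.sqrt (E (n + 1)) := by
      have h1 : ⟪M x, x⟫ ≤ τ ^ 2 * E (n + 1) := by
        rw [hEn1]
        have h2 : 0 ≤ ⟪K p, p⟫ := hKpsd p
        have h3 : (τ ^ 2) * ((τ ^ 2)⁻¹ * ⟪M x, x⟫) = ⟪M x, x⟫ := by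
          field_simp
        nlinarith [sq_nonneg τ, pow_pos hτ 2]
      calc Real.sqrt ⟪M x, x⟫ ≤ Real.sqrt (τ ^ 2 * E (n + 1)) := Real.sqrt_le_sqrt h1
        _ = τ * Real.sqrt (E (n + 1)) := by
            rw [Real.sqrt_mul (sq_nonneg τ), Real.sqrt_sq hτ.le]
    have hyb : Real.sqrt ⟪M y, y⟫ ≤ τ * Real.sqrt (E n) := by
      have h1 : ⟪M y, y⟫ ≤ τ ^ 2 * E n := by
        rw [hEn]
        have h2 : 0 ≤ ⟪K q, q⟫ := hKpsd q
        have h3 : (τ ^ 2) * ((τ ^ 2)⁻¹ * ⟪M y, y⟫) = ⟪M y, y⟫ := by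
          field_simp
        nlinarith [sq_nonneg τ, pow_pos hτ 2]
      calc Real.sqrt ⟪M y, y⟫ ≤ Real.sqrt (τ ^ 2 * E n) := Real.sqrt_le_sqrt h1
        _ = τ * Real.sqrt (E n) := by
            rw [Real.sqrt_mul (sq_nonneg τ), Real.sqrt_sq hτ.le]
    have hcs1 : ⟪M (f (n + 1)), x⟫ ≤ F (n + 1) * Real.sqrt ⟪M x, x⟫ :=
      psd_cauchy_schwarz M hMsa hMnn (f (n + 1)) x
    have hcs2 : ⟪M (f (n + 1)), y⟫ ≤ F (n + 1) * Real.sqrt ⟪M y, y⟫ :=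
      psd_cauchy_schwarz M hMsa hMnn (f (n + 1)) y
    have hwsum : (inner ℝ (M (f (n + 1))) w : ℝ) = ⟪M (f (n + 1)), x⟫ + ⟪M (f (n + 1)), y⟫ := by
      rw [hwxy, inner_add_right]
    have hEdiff : E (n + 1) - E n ≤
        τ * F (n + 1) * (Real.sqrt (E (n + 1)) + Real.sqrt (E n)) := by
      have h1 : E (n + 1) - E n = ⟪M (f (n + 1)), w⟫ := by
        rw [hEn1, hEn, ← hid]; ring
      rw [h1, hwsum]
      have hFn := hFnn (n + 1)
      calc ⟪M (f (n + 1)), x⟫ + ⟪M (f (n + 1)), y⟫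
          ≤ F (n + 1) * Real.sqrt ⟪M x, x⟫ + F (n + 1) * Real.sqrt ⟪M y, y⟫ :=
            add_le_add hcs1 hcs2
        _ ≤ F (n + 1) * (τ * Real.sqrt (E (n + 1))) + F (n + 1) * (τ * Real.sqrt (E n)) :=
            add_le_add (mul_le_mul_of_nonneg_left hxb hFn)
              (mul_le_mul_of_nonneg_left hyb hFn)
        _ = τ * F (n + 1) * (Real.sqrt (E (n + 1)) + Real.sqrt (E n)) := by ring
    exact sqrt_step _ _ _ (hEnn _) (hEnn _) (mul_nonneg hτ.le (hFnn _)) hEdiff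
  -- induction
  have hmain : ∀ n, Real.sqrt (E n) ≤
      Real.sqrt (E 0) + ∑ i ∈ Finset.Icc 1 n, τ * F i := by
    intro n
    induction n with
    | zero => simp
    | succ n ih =>
        rw [Finset.sum_Icc_succ_top (by omega : 1 ≤ n + 1)]
        calc Real.sqrt (E (n + 1)) ≤ Real.sqrt (E n) + τ * F (n + 1) := hstep n
          _ ≤ Real.sqrt (E 0) + ∑ i ∈ Finset.Icc 1 n, τ * F i + τ * F (n + 1) := by
              linarith
          _ = Real.sqrt (E 0) + ((∑ i ∈ Finset.Icc 1 n, τ * F i) + τ * F (n + 1)) := by ring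
  intro n
  have hS : 0 ≤ ∑ i ∈ Finset.Icc 1 n, τ * F i :=
    Finset.sum_nonneg fun i _ => mul_nonneg hτ.le (hFnn i)
  have h1 := hmain n
  have hEn2 : (Real.sqrt (E n)) ^ 2 = E n := Real.sq_sqrt (hEnn _)
  have hE02 : (Real.sqrt (E 0)) ^ 2 = E 0 := Real.sq_sqrt (hEnn _)
  have hEbound : E n ≤ 2 * E 0 + 4 * (∑ i ∈ Finset.Icc 1 n, τ * F i) ^ 2 :=
    final_bound _ _ _ (hEnn _) (hEnn _) hS h1
  have hLHS : opSemiNorm M (τ⁻¹ • (u (n + 1) - u n)) ^ 2 +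
      opSemiNorm K ((2 : ℝ)⁻¹ • (u (n + 1) + u n)) ^ 2 = E n := by
    rw [hE]
    simp only [opSemiNorm, Real.sq_sqrt (hMnn _), Real.sq_sqrt (hKpsd _)]
  have hRHS : 2 * opSemiNorm M (τ⁻¹ • (u 1 - u 0)) ^ 2 +
      2 * opSemiNorm K ((2 : ℝ)⁻¹ • (u 1 + u 0)) ^ 2 = 2 * E 0 := by
    rw [hE]
    simp only [opSemiNorm, Real.sq_sqrt (hMnn _), Real.sq_sqrt (hKpsd _)]
    ring
  rw [hLHS]
  calc E n ≤ 2 * E 0 + 4 * (∑ i ∈ Finset.Icc 1 n, τ * F i) ^ 2 := hEbound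
    _ = _ := by rw [← hRHS]
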